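/- arXiv:1211.6310 — 2 statements merged into one kernel-verified Lean document; each statement's English description precedes it below -/
import Mathlib

section
/- Let G be a group and A, B two G-graded PI-algebras with T_G(A) = T_G(B). Then for any positive integers d_1,…,d_m, T_G(UT(d_1,…,d_m;A)) = T_G(UT(d_1,…,d_m;B)); in particular T_G(M_n(A)) = T_G(M_n(B)) for every n. -/
noncomputable section

/-- The set of `G`-graded polynomial identities of a `G`-graded algebra `A`. -/
def gradedIdentities (F : Type*) [Field F] (G : Type*) [Group G]
    {A : Type*} [Ring A] [Algebra F A] (𝒜 : G → Submodule F A) :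
    Set (FreeAlgebra F (ℕ × G)) :=
  {f | ∀ φ : FreeAlgebra F (ℕ × G) →ₐ[F] A,
    (∀ p : ℕ × G, φ (FreeAlgebra.ι F p) ∈ 𝒜 p.2) → φ f = 0}

/-- `blockOf d i` is the index of the block containing the row/column index `i`. -/
def blockOf (d : ℕ → ℕ) (i : ℕ) : ℕ :=
  sInf {t | i < ∑ s ∈ Finset.range (t + 1), d s}

/-- The block function associated with the block sizes `d : Fin m → ℕ`. -/
def blk {m : ℕ} (d : Fin m → ℕ) (i : ℕ) : ℕ :=
  blockOf (fun s => if h : s < m then d ⟨s, h⟩ else 0) i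

/-- The set of `G`-graded polynomial identities of `UT(d₁,…,dₘ; A)`, the algebra of
block upper-triangular matrices over `A`, graded entrywise. -/
def gradedIdentitiesUT (F : Type*) [Field F] (G : Type*) [Group G]
    {A : Type*} [Ring A] [Algebra F A] (𝒜 : G → Submodule F A)
    {m : ℕ} (d : Fin m → ℕ) : Set (FreeAlgebra F (ℕ × G)) :=
  {f | ∀ φ : FreeAlgebra F (ℕ × G) →ₐ[F] Matrix (Fin (∑ t, d t)) (Fin (∑ t, d t)) A,
    (∀ p : ℕ × G, (∀ i j, φ (FreeAlgebra.ι F p) i j ∈ 𝒜 p.2) ∧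
      ∀ i j : Fin (∑ t, d t), blk d (j : ℕ) < blk d (i : ℕ) →
        φ (FreeAlgebra.ι F p) i j = 0) → φ f = 0}

/-- Generic block upper-triangular matrix with free-algebra variable entries. -/
def genMat (F : Type*) [Field F] (G : Type*) [Group G] {m : ℕ} (d : Fin m → ℕ)
    (p : ℕ × G) : Matrix (Fin (∑ t, d t)) (Fin (∑ t, d t)) (FreeAlgebra F (ℕ × G)) :=
  fun i j => if blk d (j : ℕ) < blk d (i : ℕ) then 0
    else FreeAlgebra.ι F (Nat.pair p.1 (Nat.pair i j), p.2)

/-- The generic evaluation homomorphism. -/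
def genPsi (F : Type*) [Field F] (G : Type*) [Group G] {m : ℕ} (d : Fin m → ℕ) :
    FreeAlgebra F (ℕ × G) →ₐ[F]
      Matrix (Fin (∑ t, d t)) (Fin (∑ t, d t)) (FreeAlgebra F (ℕ × G)) :=
  FreeAlgebra.lift F (genMat F G d)

theorem mem_gradedIdentitiesUT_iff (F : Type*) [Field F] (G : Type*) [Group G]
    {A : Type*} [Ring A] [Algebra F A] (𝒜 : G → Submodule F A)
    {m : ℕ} (d : Fin m → ℕ) (f : FreeAlgebra F (ℕ × G)) :
    f ∈ gradedIdentitiesUT F G 𝒜 d ↔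
      ∀ i j, genPsi F G d f i j ∈ gradedIdentities F G 𝒜 := by
  constructor
  · intro hf i j ψ hψ
    have hcond : ∀ p : ℕ × G,
        (∀ i j, ((AlgHom.mapMatrix ψ).comp (genPsi F G d)) (FreeAlgebra.ι F p) i j ∈ 𝒜 p.2) ∧
        ∀ i j : Fin (∑ t, d t), blk d (j : ℕ) < blk d (i : ℕ) →
          ((AlgHom.mapMatrix ψ).comp (genPsi F G d)) (FreeAlgebra.ι F p) i j = 0 := by
      intro p
      constructor
      · intro i j
        simp only [AlgHom.comp_apply, genPsi, FreeAlgebra.lift_ι_apply,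
          AlgHom.mapMatrix_apply, Matrix.map_apply, genMat]
        split
        · simp
        · exact hψ (Nat.pair p.1 (Nat.pair (i : ℕ) (j : ℕ)), p.2)
      · intro i j hij
        simp only [AlgHom.comp_apply, genPsi, FreeAlgebra.lift_ι_apply,
          AlgHom.mapMatrix_apply, Matrix.map_apply, genMat, if_pos hij]
        simp
    have h0 := hf _ hcond
    have := congrFun (congrFun h0 i) j
    simpa [AlgHom.comp_apply, AlgHom.mapMatrix_apply, Matrix.map_apply] using this
  · intro hf φ hφ
    -- decoding homomorphism
    set θ : FreeAlgebra F (ℕ × G) →ₐ[F] A := FreeAlgebra.lift F (fun q : ℕ × G =>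
      if hq : (Nat.unpair (Nat.unpair q.1).2).1 < ∑ t, d t ∧ (Nat.unpair (Nat.unpair q.1).2).2 < ∑ t, d t then
        φ (FreeAlgebra.ι F ((Nat.unpair q.1).1, q.2)) ⟨_, hq.1⟩ ⟨_, hq.2⟩ else 0) with hθ
    have hθgen : ∀ q : ℕ × G, θ (FreeAlgebra.ι F q) ∈ 𝒜 q.2 := by
      intro q
      rw [hθ, FreeAlgebra.lift_ι_apply]
      split
      · exact (hφ ((Nat.unpair q.1).1, q.2)).1 _ _
      · exact Submodule.zero_mem _
    have hfac : (AlgHom.mapMatrix θ).comp (genPsi F G d) = φ := by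
      apply FreeAlgebra.hom_ext
      funext p
      simp only [Function.comp_apply, AlgHom.comp_apply, genPsi, FreeAlgebra.lift_ι_apply,
        AlgHom.mapMatrix_apply]
      ext i j
      simp only [Matrix.map_apply, genMat]
      split
      · rename_i hij
        rw [map_zero]
        exact ((hφ p).2 i j hij).symm
      · rw [hθ, FreeAlgebra.lift_ι_apply]
        have hu : Nat.unpair (Nat.unpair (Nat.pair p.1 (Nat.pair (i : ℕ) (j : ℕ)))).2
            = ((i : ℕ), (j : ℕ)) := by simp [Nat.unpair_pair]
        rw [dif_pos]
        · congr 1 <;> simp [hu, Nat.unpair_pair]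
        · rw [hu]; exact ⟨i.2, j.2⟩
    rw [← hfac]
    ext i j
    simp only [AlgHom.comp_apply, AlgHom.mapMatrix_apply, Matrix.map_apply, Matrix.zero_apply]
    exact hf i j θ hθgen

/-- If two `G`-graded PI-algebras `A` and `B` satisfy the same graded identities, then
for any block sizes `d₁,…,dₘ` the block upper-triangular matrix algebras
`UT(d₁,…,dₘ;A)` and `UT(d₁,…,dₘ;B)` satisfy the same graded identities; in particular
`T_G(M_n(A)) = T_G(M_n(B))` for every `n`. -/
theorem gradedIdentitiesUT_eq_of_eq
    (F : Type*) [Field F] [CharZero F] (G : Type*) [Group G]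
    {A B : Type*} [Ring A] [Algebra F A] [Ring B] [Algebra F B]
    (𝒜 : G → Submodule F A) (ℬ : G → Submodule F B)
    (h𝒜one : (1 : A) ∈ 𝒜 1) (h𝒜mul : ∀ g h, ∀ a ∈ 𝒜 g, ∀ b ∈ 𝒜 h, a * b ∈ 𝒜 (g * h))
    (hℬone : (1 : B) ∈ ℬ 1) (hℬmul : ∀ g h, ∀ a ∈ ℬ g, ∀ b ∈ ℬ h, a * b ∈ ℬ (g * h))
    (hPIA : ∃ f ∈ gradedIdentities F G 𝒜, f ≠ 0)
    (hPIB : ∃ f ∈ gradedIdentities F G ℬ, f ≠ 0)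
    (h : gradedIdentities F G 𝒜 = gradedIdentities F G ℬ) :
    (∀ (m : ℕ) (d : Fin m → ℕ), (∀ t, 0 < d t) →
      gradedIdentitiesUT F G 𝒜 d = gradedIdentitiesUT F G ℬ d) ∧
    ∀ n : ℕ, 0 < n →
      gradedIdentitiesUT F G 𝒜 (fun _ : Fin 1 => n) =
        gradedIdentitiesUT F G ℬ (fun _ : Fin 1 => n) := by
  have key : ∀ (m : ℕ) (d : Fin m → ℕ),
      gradedIdentitiesUT F G 𝒜 d = gradedIdentitiesUT F G ℬ d := by
    intro m d
    ext f
    rw [mem_gradedIdentitiesUT_iff, mem_gradedIdentitiesUT_iff, h]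
  exact ⟨fun m d _ => key m d, fun n _ => key 1 _⟩
end
end

section
/- Let E carry the Z/2-grading deg(·)_{k*} (deg(e_i)=1 for i ≤ k, 0 otherwise) and let R = UT(1,1;E) be 2×2 upper-triangular matrices over E graded entrywise. Then the product of T-ideals T_{Z/2}(E)·T_{Z/2}(E) is strictly contained in T_{Z/2}(R): the monomial z_1⋯z_{k+1} lies in T_{Z/2}(R) but not in T_{Z/2}(E)·T_{Z/2}(E). -/
noncomputable section

/-- The generator `e_i` of the infinite-dimensional Grassmann algebra. -/
def grassGen (F : Type*) [Field F] (i : ℕ) : ExteriorAlgebra F (ℕ →₀ F) :=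
  ExteriorAlgebra.ι F (Finsupp.single i 1)

/-- The homogeneous component of degree `g ∈ ℤ/2` of the Grassmann algebra for the
grading `deg(·)_{k*}` (`deg(e_i) = 1` for the first `k` generators, `0` otherwise). -/
def grassCompKStar (F : Type*) [Field F] (k : ℕ) (g : ZMod 2) :
    Submodule F (ExteriorAlgebra F (ℕ →₀ F)) :=
  Submodule.span F
    {x | ∃ l : List ℕ, ((l.countP fun i => decide (i < k)) : ZMod 2) = g ∧
      x = (l.map (grassGen F)).prod}

/-- The `ℤ/2`-graded identities of the Grassmann algebra `E` with the grading
`deg(·)_{k*}`, in the free `ℤ/2`-graded algebra on the variables indexed by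
`ℕ × ZMod 2` (the variable `(n, g)` having degree `g`). -/
def TE (F : Type*) [Field F] [CharZero F] (k : ℕ) : Set (FreeAlgebra F (ℕ × ZMod 2)) :=
  {f | ∀ φ : FreeAlgebra F (ℕ × ZMod 2) →ₐ[F] ExteriorAlgebra F (ℕ →₀ F),
    (∀ p : ℕ × ZMod 2, φ (FreeAlgebra.ι F p) ∈ grassCompKStar F k p.2) → φ f = 0}

/-- The homogeneous component of degree `g` of `R = UT(1,1;E)` (upper triangular
`2×2` matrices over `E`), graded entrywise from the grading `deg(·)_{k*}` of `E`. -/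
def UT2comp (F : Type*) [Field F] (k : ℕ) (g : ZMod 2) :
    Set (Matrix (Fin 2) (Fin 2) (ExteriorAlgebra F (ℕ →₀ F))) :=
  {M | M 1 0 = 0 ∧ ∀ i j, M i j ∈ grassCompKStar F k g}

/-- The `ℤ/2`-graded identities of `R = UT(1,1;E)` with the grading induced by
`deg(·)_{k*}` on `E`. -/
def TR (F : Type*) [Field F] [CharZero F] (k : ℕ) : Set (FreeAlgebra F (ℕ × ZMod 2)) :=
  {f | ∀ φ : FreeAlgebra F (ℕ × ZMod 2) →ₐ[F]
      Matrix (Fin 2) (Fin 2) (ExteriorAlgebra F (ℕ →₀ F)),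
    (∀ p : ℕ × ZMod 2, φ (FreeAlgebra.ι F p) ∈ UT2comp F k p.2) → φ f = 0}

namespace ProdTIdealAux

open ExteriorAlgebra

variable (F : Type*) [Field F] (k : ℕ)

/-- span of products of generators with at least `c` indices below `k`. -/
def lowDeg (c : ℕ) : Submodule F (ExteriorAlgebra F (ℕ →₀ F)) :=
  Submodule.span F {x | ∃ l : List ℕ, c ≤ l.countP (fun i => decide (i < k)) ∧
    x = (l.map (grassGen F)).prod}

lemma grass_prod_eq (l : List ℕ) :
    (l.map (grassGen F)).prod
      = ExteriorAlgebra.ιMulti F l.length (fun i => Finsupp.single (l.get i) (1 : F)) := by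
  rw [ExteriorAlgebra.ιMulti_apply]
  conv_lhs => rw [← List.ofFn_get l, List.map_ofFn]
  rfl

lemma prod_eq_zero_of_many_low (l : List ℕ)
    (h : k + 1 ≤ l.countP (fun i => decide (i < k))) :
    (l.map (grassGen F)).prod = 0 := by
  have hnd : ¬ l.Nodup := by
    intro hnd
    have h1 : (l.filter fun i => decide (i < k)).Nodup := hnd.filter _
    have h2 : (l.filter fun i => decide (i < k)).toFinset ⊆ Finset.range k := by
      intro x hx
      simp only [List.mem_toFinset, List.mem_filter, decide_eq_true_eq] at hx
      simpa using hx.2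
    have h3 := Finset.card_le_card h2
    rw [List.toFinset_card_of_nodup h1, Finset.card_range] at h3
    rw [List.countP_eq_length_filter] at h
    omega
  have hinj : ¬ Function.Injective (fun i : Fin l.length => Finsupp.single (l.get i) (1 : F)) := by
    intro hinj
    apply hnd
    rw [List.nodup_iff_injective_get]
    intro i j hij
    exact hinj (by simp only [hij])
  rw [grass_prod_eq]
  exact AlternatingMap.map_eq_zero_of_not_injective _ _ hinj

lemma comp_one_le : grassCompKStar F k 1 ≤ lowDeg F k 1 := by
  apply Submodule.span_mono
  rintro x ⟨l, hl, rfl⟩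
  refine ⟨l, ?_, rfl⟩
  by_contra hc
  have : l.countP (fun i => decide (i < k)) = 0 := by omega
  rw [this] at hl
  simp at hl

lemma lowDeg_mul {a b : ℕ} {x y : ExteriorAlgebra F (ℕ →₀ F)}
    (hx : x ∈ lowDeg F k a) (hy : y ∈ lowDeg F k b) :
    x * y ∈ lowDeg F k (a + b) := by
  have hle : lowDeg F k a * lowDeg F k b ≤ lowDeg F k (a + b) := by
    rw [lowDeg, lowDeg, Submodule.span_mul_span]
    apply Submodule.span_le.2
    rintro z hz
    rw [Set.mem_mul] at hz
    obtain ⟨u, ⟨l1, h1, rfl⟩, v, ⟨l2, h2, rfl⟩, rfl⟩ := hz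
    refine Submodule.subset_span ⟨l1 ++ l2, ?_, ?_⟩
    · rw [List.countP_append]; omega
    · rw [List.map_append, List.prod_append]
  exact hle (Submodule.mul_mem_mul hx hy)

lemma lowDeg_succ_k : lowDeg F k (k + 1) = ⊥ := by
  rw [lowDeg, eq_bot_iff]
  apply Submodule.span_le.2
  rintro x ⟨l, hl, rfl⟩
  rw [SetLike.mem_coe, Submodule.mem_bot]
  exact prod_eq_zero_of_many_low F k l hl

lemma one_mem_lowDeg_zero : (1 : ExteriorAlgebra F (ℕ →₀ F)) ∈ lowDeg F k 0 :=
  Submodule.subset_span ⟨[], by simp, by simp⟩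

lemma matrix_list_prod_mem (L : List (Matrix (Fin 2) (Fin 2) (ExteriorAlgebra F (ℕ →₀ F))))
    (h : ∀ M ∈ L, ∀ i j, M i j ∈ lowDeg F k 1) :
    ∀ i j, L.prod i j ∈ lowDeg F k L.length := by
  induction L with
  | nil =>
    intro i j
    rw [List.prod_nil, List.length_nil, Matrix.one_apply]
    split_ifs
    · exact one_mem_lowDeg_zero F k
    · exact Submodule.zero_mem _
  | cons M L ih =>
    intro i j
    rw [List.prod_cons, List.length_cons, Matrix.mul_apply]
    refine Submodule.sum_mem _ fun l _ => ?_
    have := lowDeg_mul F k (h M List.mem_cons_self i l)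
      (ih (fun N hN => h N (List.mem_cons_of_mem M hN)) l j)
    rwa [add_comm] at this

/-- upper triangular 2x2 matrices form a subalgebra. -/
def UTsub : Subalgebra F (Matrix (Fin 2) (Fin 2) (ExteriorAlgebra F (ℕ →₀ F))) where
  carrier := {M | M 1 0 = 0}
  mul_mem' := by
    intro a b ha hb
    simp only [Set.mem_setOf_eq] at *
    rw [Matrix.mul_apply, Fin.sum_univ_two, ha, hb]
    simp
  add_mem' := by
    intro a b ha hb
    simp only [Set.mem_setOf_eq] at *
    rw [Matrix.add_apply, ha, hb, add_zero]
  algebraMap_mem' := by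
    intro r
    simp [Set.mem_setOf_eq, Matrix.algebraMap_matrix_apply]

def diag0 : UTsub F →ₐ[F] ExteriorAlgebra F (ℕ →₀ F) where
  toFun M := (M : Matrix (Fin 2) (Fin 2) (ExteriorAlgebra F (ℕ →₀ F))) 0 0
  map_one' := Matrix.one_apply_eq 0
  map_mul' a b := by
    have hb : (b : Matrix (Fin 2) (Fin 2) (ExteriorAlgebra F (ℕ →₀ F))) 1 0 = 0 := b.2
    show ((a : Matrix (Fin 2) (Fin 2) (ExteriorAlgebra F (ℕ →₀ F))) *
        (b : Matrix (Fin 2) (Fin 2) (ExteriorAlgebra F (ℕ →₀ F)))) 0 0 =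
      (a : Matrix (Fin 2) (Fin 2) (ExteriorAlgebra F (ℕ →₀ F))) 0 0 *
        (b : Matrix (Fin 2) (Fin 2) (ExteriorAlgebra F (ℕ →₀ F))) 0 0
    rw [Matrix.mul_apply, Fin.sum_univ_two, hb, mul_zero, add_zero]
  map_zero' := rfl
  map_add' a b := rfl
  commutes' r := by
    show (algebraMap F (Matrix (Fin 2) (Fin 2) (ExteriorAlgebra F (ℕ →₀ F))) r) 0 0 = _
    simp [Matrix.algebraMap_matrix_apply]

def diag1 : UTsub F →ₐ[F] ExteriorAlgebra F (ℕ →₀ F) where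
  toFun M := (M : Matrix (Fin 2) (Fin 2) (ExteriorAlgebra F (ℕ →₀ F))) 1 1
  map_one' := Matrix.one_apply_eq 1
  map_mul' a b := by
    have ha : (a : Matrix (Fin 2) (Fin 2) (ExteriorAlgebra F (ℕ →₀ F))) 1 0 = 0 := a.2
    show ((a : Matrix (Fin 2) (Fin 2) (ExteriorAlgebra F (ℕ →₀ F))) *
        (b : Matrix (Fin 2) (Fin 2) (ExteriorAlgebra F (ℕ →₀ F)))) 1 1 =
      (a : Matrix (Fin 2) (Fin 2) (ExteriorAlgebra F (ℕ →₀ F))) 1 1 *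
        (b : Matrix (Fin 2) (Fin 2) (ExteriorAlgebra F (ℕ →₀ F))) 1 1
    rw [Matrix.mul_apply, Fin.sum_univ_two, ha, zero_mul, zero_add]
  map_zero' := rfl
  map_add' a b := rfl
  commutes' r := by
    show (algebraMap F (Matrix (Fin 2) (Fin 2) (ExteriorAlgebra F (ℕ →₀ F))) r) 1 1 = _
    simp [Matrix.algebraMap_matrix_apply]

lemma strict_mul_eq_zero {A B : Matrix (Fin 2) (Fin 2) (ExteriorAlgebra F (ℕ →₀ F))}
    (hA00 : A 0 0 = 0) (hA10 : A 1 0 = 0) (hA11 : A 1 1 = 0)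
    (hB10 : B 1 0 = 0) (hB00 : B 0 0 = 0) (hB11 : B 1 1 = 0) : A * B = 0 := by
  ext i j
  rw [Matrix.mul_apply, Fin.sum_univ_two]
  fin_cases i <;> fin_cases j <;>
    simp [hA00, hA10, hA11, hB10, hB00, hB11]

variable [CharZero F]

lemma eval_span_zero
    (φ : FreeAlgebra F (ℕ × ZMod 2) →ₐ[F] Matrix (Fin 2) (Fin 2) (ExteriorAlgebra F (ℕ →₀ F)))
    (h10 : ∀ p : ℕ × ZMod 2, φ (FreeAlgebra.ι F p) 1 0 = 0)
    (h00 : ∀ p : ℕ × ZMod 2, φ (FreeAlgebra.ι F p) 0 0 ∈ grassCompKStar F k p.2)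
    (h11 : ∀ p : ℕ × ZMod 2, φ (FreeAlgebra.ι F p) 1 1 ∈ grassCompKStar F k p.2)
    {x : FreeAlgebra F (ℕ × ZMod 2)}
    (hx : x ∈ Submodule.span F {y : FreeAlgebra F (ℕ × ZMod 2) |
      ∃ f ∈ TE F k, ∃ g ∈ TE F k, y = f * g}) :
    φ x = 0 := by
  have him : ∀ z, φ z ∈ UTsub F := by
    intro z
    have hle : Algebra.adjoin F (Set.range (FreeAlgebra.ι F (X := ℕ × ZMod 2)))
        ≤ (UTsub F).comap φ := by
      apply Algebra.adjoin_le
      rintro _ ⟨p, rfl⟩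
      exact h10 p
    have : z ∈ Algebra.adjoin F (Set.range (FreeAlgebra.ι F (X := ℕ × ZMod 2))) := by
      rw [FreeAlgebra.adjoin_range_ι]; trivial
    exact hle this
  set φ' : FreeAlgebra F (ℕ × ZMod 2) →ₐ[F] UTsub F := φ.codRestrict (UTsub F) him with hφ'
  have key : ∀ f ∈ TE F k, φ f 0 0 = 0 ∧ φ f 1 1 = 0 ∧ φ f 1 0 = 0 := by
    intro f hf
    refine ⟨?_, ?_, him f⟩
    · exact hf ((diag0 F).comp φ') (fun p => h00 p)
    · exact hf ((diag1 F).comp φ') (fun p => h11 p)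
  have hker : Submodule.span F {y : FreeAlgebra F (ℕ × ZMod 2) |
      ∃ f ∈ TE F k, ∃ g ∈ TE F k, y = f * g} ≤ LinearMap.ker φ.toLinearMap := by
    apply Submodule.span_le.2
    rintro y ⟨f, hf, g, hg, rfl⟩
    rw [SetLike.mem_coe, LinearMap.mem_ker]
    show φ (f * g) = 0
    rw [map_mul]
    obtain ⟨hf0, hf1, hf10⟩ := key f hf
    obtain ⟨hg0, hg1, hg10⟩ := key g hg
    exact strict_mul_eq_zero F hf0 hf10 hf1 hg10 hg0 hg1
  exact hker hx

lemma grassGen_mem_comp_one {n : ℕ} (hn : n < k) :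
    grassGen F n ∈ grassCompKStar F k 1 := by
  refine Submodule.subset_span ⟨[n], ?_, by simp⟩
  simp [hn]

def Nmat (n : ℕ) : Matrix (Fin 2) (Fin 2) (ExteriorAlgebra F (ℕ →₀ F)) :=
  if n = 0 then Matrix.of ![![0, 1], ![0, 0]]
  else if n ≤ k then Matrix.of ![![0, 0], ![0, grassGen F (n - 1)]]
  else 0

def psi : FreeAlgebra F (ℕ × ZMod 2) →ₐ[F] Matrix (Fin 2) (Fin 2) (ExteriorAlgebra F (ℕ →₀ F)) :=
  FreeAlgebra.lift F (fun p : ℕ × ZMod 2 => if p.2 = 1 then Nmat F k p.1 else 0)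

lemma psi_ι (p : ℕ × ZMod 2) :
    psi F k (FreeAlgebra.ι F p) = if p.2 = 1 then Nmat F k p.1 else 0 :=
  FreeAlgebra.lift_ι_apply _ _

lemma Nmat_10 (n : ℕ) : Nmat F k n 1 0 = 0 := by
  unfold Nmat
  split_ifs <;> simp [Matrix.of_apply]

lemma Nmat_00 (n : ℕ) : Nmat F k n 0 0 = 0 := by
  unfold Nmat
  split_ifs <;> simp [Matrix.of_apply]

lemma Nmat_11 (n : ℕ) : Nmat F k n 1 1 ∈ grassCompKStar F k 1 := by
  unfold Nmat
  split_ifs with h1 h2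
  · simpa using Submodule.zero_mem _
  · have : n - 1 < k := by omega
    simpa using grassGen_mem_comp_one F k this
  · simpa using Submodule.zero_mem _

lemma psi_10 (p : ℕ × ZMod 2) : psi F k (FreeAlgebra.ι F p) 1 0 = 0 := by
  rw [psi_ι]; split_ifs with h
  · exact Nmat_10 F k p.1
  · rfl

lemma psi_00 (p : ℕ × ZMod 2) : psi F k (FreeAlgebra.ι F p) 0 0 ∈ grassCompKStar F k p.2 := by
  rw [psi_ι]; split_ifs with h
  · rw [Nmat_00]; exact Submodule.zero_mem _
  · exact Submodule.zero_mem _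

lemma psi_11 (p : ℕ × ZMod 2) : psi F k (FreeAlgebra.ι F p) 1 1 ∈ grassCompKStar F k p.2 := by
  rw [psi_ι]; split_ifs with h
  · rw [h]; exact Nmat_11 F k p.1
  · exact Submodule.zero_mem _

lemma corner_mul (x c : ExteriorAlgebra F (ℕ →₀ F)) :
    Matrix.of ![![0, x], ![0, 0]] * Matrix.of ![![(0 : ExteriorAlgebra F (ℕ →₀ F)), 0], ![0, c]]
      = Matrix.of ![![0, x * c], ![0, 0]] := by
  ext i j
  rw [Matrix.mul_apply, Fin.sum_univ_two]
  fin_cases i <;> fin_cases j <;> simp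

lemma corner_prod (m : ℕ) (c : Fin m → ExteriorAlgebra F (ℕ →₀ F)) :
    Matrix.of ![![0, 1], ![0, 0]] *
      (List.ofFn fun i : Fin m => Matrix.of ![![(0 : ExteriorAlgebra F (ℕ →₀ F)), 0], ![0, c i]]).prod
      = Matrix.of ![![0, (List.ofFn c).prod], ![0, 0]] := by
  induction m with
  | zero => simp
  | succ m ih =>
    rw [List.ofFn_succ' fun i : Fin (m + 1) =>
        Matrix.of ![![(0 : ExteriorAlgebra F (ℕ →₀ F)), 0], ![0, c i]],
      List.ofFn_succ' c, List.concat_eq_append, List.concat_eq_append,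
      List.prod_append, List.prod_append, ← mul_assoc, ih, List.prod_singleton,
      List.prod_singleton, corner_mul]

lemma ofFn_grass_ne_zero :
    (List.ofFn fun i : Fin k => grassGen F (i : ℕ)).prod ≠ 0 := by
  have hv : (List.ofFn fun i : Fin k => grassGen F (i : ℕ)).prod
      = ExteriorAlgebra.ιMulti F k (fun i : Fin k => Finsupp.single ((i : ℕ)) (1 : F)) := by
    rw [ExteriorAlgebra.ιMulti_apply]; rfl
  set T : (ℕ →₀ F) [⋀^Fin k]→ₗ[F] F :=
    (Matrix.detRowAlternating (R := F) (n := Fin k)).compLinearMap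
      (LinearMap.pi fun j : Fin k => Finsupp.lapply ((j : ℕ))) with hT
  set fam : ∀ i : ℕ, (ℕ →₀ F) [⋀^Fin i]→ₗ[F] F :=
    Function.update (fun i => 0) k T with hfam
  intro h0
  have h1 := ExteriorAlgebra.liftAlternating_apply_ιMulti (R := F) fam
    (fun i : Fin k => Finsupp.single ((i : ℕ)) (1 : F))
  rw [← hv, h0, map_zero] at h1
  have h2 : fam k = T := by
    rw [hfam]
    exact Function.update_self (β := fun i : ℕ => (ℕ →₀ F) [⋀^Fin i]→ₗ[F] F) k T _
  rw [h2] at h1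
  have h3 : T (fun i : Fin k => Finsupp.single ((i : ℕ)) (1 : F)) = 1 := by
    rw [hT]
    rw [AlternatingMap.compLinearMap_apply]
    have : (fun i : Fin k => (LinearMap.pi (R := F) fun j : Fin k => Finsupp.lapply ((j : ℕ)))
        (Finsupp.single ((i : ℕ)) (1 : F))) = (1 : Matrix (Fin k) (Fin k) F) := by
      ext i j
      simp [LinearMap.pi_apply, Finsupp.lapply_apply, Finsupp.single_apply,
        Matrix.one_apply, Fin.val_inj]
    rw [this]
    exact Matrix.det_one
  rw [h3] at h1
  exact one_ne_zero h1.symm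

end ProdTIdealAux


set_option maxHeartbeats 2000000 in
/-- With the grading `deg(·)_{k*}` on `E` and `R = UT(1,1;E)`, the product of T-ideals
`T_{ℤ/2}(E)·T_{ℤ/2}(E)` is strictly contained in `T_{ℤ/2}(R)`: the monomial
`z₁ ⋯ z_{k+1}` in degree-`1` variables lies in `T_{ℤ/2}(R)` but not in the product
`T_{ℤ/2}(E)·T_{ℤ/2}(E)` (the span of products of two graded identities of `E`). -/
theorem product_TIdeal_ssubset (F : Type*) [Field F] [CharZero F] (k : ℕ) :
    ((Submodule.span F {y : FreeAlgebra F (ℕ × ZMod 2) |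
        ∃ f ∈ TE F k, ∃ g ∈ TE F k, y = f * g} : Submodule F _) : Set _) ⊂ TR F k ∧
      (List.ofFn fun t : Fin (k + 1) =>
          FreeAlgebra.ι F ((t : ℕ), (1 : ZMod 2))).prod ∈ TR F k ∧
      (List.ofFn fun t : Fin (k + 1) =>
          FreeAlgebra.ι F ((t : ℕ), (1 : ZMod 2))).prod ∉
        Submodule.span F {y : FreeAlgebra F (ℕ × ZMod 2) |
          ∃ f ∈ TE F k, ∃ g ∈ TE F k, y = f * g} := by
  classical
  set w := (List.ofFn fun t : Fin (k + 1) =>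
      FreeAlgebra.ι F ((t : ℕ), (1 : ZMod 2))).prod with hw
  have hsub : ((Submodule.span F {y : FreeAlgebra F (ℕ × ZMod 2) |
      ∃ f ∈ TE F k, ∃ g ∈ TE F k, y = f * g} : Submodule F _) : Set _) ⊆ TR F k := by
    intro x hx φ hφ
    exact ProdTIdealAux.eval_span_zero F k φ (fun p => (hφ p).1)
      (fun p => (hφ p).2 0 0) (fun p => (hφ p).2 1 1) hx
  have hwTR : w ∈ TR F k := by
    intro φ hφ
    have hφw : φ w = (List.ofFn fun t : Fin (k + 1) =>
        φ (FreeAlgebra.ι F ((t : ℕ), (1 : ZMod 2)))).prod := by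
      rw [hw, map_list_prod, List.map_ofFn]
      rfl
    rw [hφw]
    have hmem : ∀ i j, (List.ofFn fun t : Fin (k + 1) =>
        φ (FreeAlgebra.ι F ((t : ℕ), (1 : ZMod 2)))).prod i j
          ∈ ProdTIdealAux.lowDeg F k (k + 1) := by
      have hall : ∀ M ∈ (List.ofFn fun t : Fin (k + 1) =>
          φ (FreeAlgebra.ι F ((t : ℕ), (1 : ZMod 2)))), ∀ i j,
            M i j ∈ ProdTIdealAux.lowDeg F k 1 := by
        intro M hM i j
        rw [List.mem_ofFn] at hM
        obtain ⟨t, rfl⟩ := hM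
        have h1 : φ (FreeAlgebra.ι F ((t : ℕ), (1 : ZMod 2))) i j ∈ grassCompKStar F k 1 :=
          (hφ ((t : ℕ), (1 : ZMod 2))).2 i j
        exact ProdTIdealAux.comp_one_le F k h1
      have := ProdTIdealAux.matrix_list_prod_mem F k _ hall
      simpa [List.length_ofFn] using this
    ext i j
    have h := hmem i j
    rw [ProdTIdealAux.lowDeg_succ_k, Submodule.mem_bot] at h
    simpa using h
  have hpsiw : ProdTIdealAux.psi F k w
      = Matrix.of ![![0, (List.ofFn fun i : Fin k => grassGen F (i : ℕ)).prod], ![0, 0]] := by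
    rw [hw, map_list_prod, List.map_ofFn]
    have heach : (ProdTIdealAux.psi F k ∘ fun t : Fin (k + 1) =>
        FreeAlgebra.ι F ((t : ℕ), (1 : ZMod 2)))
          = fun t : Fin (k + 1) => ProdTIdealAux.Nmat F k (t : ℕ) := by
      funext t
      simp only [Function.comp_apply, ProdTIdealAux.psi_ι]
      simp
    rw [heach, List.ofFn_succ]
    have h0 : ProdTIdealAux.Nmat F k ((0 : Fin (k + 1)) : ℕ)
        = Matrix.of ![![0, 1], ![0, 0]] := by
      simp [ProdTIdealAux.Nmat]
    have htail : (fun i : Fin k => ProdTIdealAux.Nmat F k ((Fin.succ i : Fin (k + 1)) : ℕ))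
        = fun i : Fin k =>
          Matrix.of ![![(0 : ExteriorAlgebra F (ℕ →₀ F)), 0], ![0, grassGen F (i : ℕ)]] := by
      funext i
      have h1 : ((Fin.succ i : Fin (k + 1)) : ℕ) = (i : ℕ) + 1 := Fin.val_succ i
      rw [h1]
      have h2 : (i : ℕ) + 1 ≠ 0 := Nat.succ_ne_zero _
      have h3 : (i : ℕ) + 1 ≤ k := i.isLt
      rw [ProdTIdealAux.Nmat, if_neg h2, if_pos h3]
      simp
    rw [h0, htail, List.prod_cons, ProdTIdealAux.corner_prod]
  have hwnotspan : w ∉ Submodule.span F {y : FreeAlgebra F (ℕ × ZMod 2) |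
      ∃ f ∈ TE F k, ∃ g ∈ TE F k, y = f * g} := by
    intro hwsp
    have h0 : ProdTIdealAux.psi F k w = 0 :=
      ProdTIdealAux.eval_span_zero F k (ProdTIdealAux.psi F k)
        (ProdTIdealAux.psi_10 F k) (ProdTIdealAux.psi_00 F k) (ProdTIdealAux.psi_11 F k) hwsp
    rw [hpsiw] at h0
    have h1 : (List.ofFn fun i : Fin k => grassGen F (i : ℕ)).prod = 0 := by
      have := congrFun (congrFun h0 0) 1
      simpa using this
    exact ProdTIdealAux.ofFn_grass_ne_zero F k h1
  refine ⟨?_, hwTR, hwnotspan⟩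
  rw [Set.ssubset_def]
  exact ⟨hsub, fun hsup => hwnotspan (hsup hwTR)⟩
end
end
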